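/- For δ > 1 and m_n = ⌈δ^n⌉, let U_{δ,n} = {ω : ∃k, m_n ≤ k ≤ m_{n+1} and S_k − k/2 > δ·√((1/2)·m_n·ln ln m_n)}, where S_k = ∑_{i=1}^k ω_i. Then L(U_{δ,n}) ≤ c·e^{−δ·ln ln m_n} for some constant c > 0, which is of order n^{−δ}; consequently ∑_n L(U_{δ,n}) < ∞. -/

import Mathlib

open MeasureTheory Filter Asymptotics
open scoped ENNReal

/-- The length-`n` prefix of an infinite binary sequence, as a list. -/
def pref (ω : ℕ → Bool) (n : ℕ) : List Bool := (List.range n).map ω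

/-- `a` is a (finite) prefix of the infinite sequence `ω`. -/
def PrefixOf (a : List Bool) (ω : ℕ → Bool) : Prop := pref ω a.length = a

/-- The cylinder set of infinite sequences extending the string `x`. -/
def Cyl (x : List Bool) : Set (ℕ → Bool) := {ω | PrefixOf x ω}

/-- Plain Kolmogorov complexity of `x` with respect to a decoding function `U`. -/
noncomputable def PC (U : List Bool →. List Bool) (x : List Bool) : ℕ :=
  sInf {n | ∃ p : List Bool, p.length = n ∧ x ∈ U p}

/-- `U` is an optimal (universal) partial computable decoding function for plain complexity. -/
def PlainOptimal (U : List Bool →. List Bool) : Prop :=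
  Partrec U ∧
    ∀ V : List Bool →. List Bool, Partrec V → ∃ c : ℕ, ∀ x p : List Bool,
      x ∈ V p → PC U x ≤ p.length + c

/-- An r.e. monotone machine representation: `R p x` means that on program `p`
the machine (eventually) outputs an extension of `x`. -/
def MonotoneRepr (R : List Bool → List Bool → Prop) : Prop :=
  REPred (fun q : List Bool × List Bool => R q.1 q.2) ∧
  (∀ p x p' x', R p x → R p' x' → p <+: p' → (x <+: x' ∨ x' <+: x)) ∧
  (∀ p x x', R p x → x' <+: x → R p x')

/-- Monotone complexity with respect to a monotone machine representation `R`. -/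
noncomputable def KmR (R : List Bool → List Bool → Prop) (x : List Bool) : ℕ :=
  sInf {n | ∃ p : List Bool, p.length = n ∧ R p x}

/-- `R` is an optimal monotone machine, so `KmR R` is the monotone complexity `Km`. -/
def MonotoneOptimal (R : List Bool → List Bool → Prop) : Prop :=
  MonotoneRepr R ∧
    ∀ R', MonotoneRepr R' → ∃ c : ℕ, ∀ x p : List Bool, R' p x → KmR R x ≤ p.length + c

/-- `S_k(ω) = ∑_{i=1}^k ω_i`, the number of ones among the first `k` bits. -/
def S (ω : ℕ → Bool) (k : ℕ) : ℕ := (pref ω k).count true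

/-- The LIL deviation set `U_{δ,n}` with `m_n = ⌈δ^n⌉`. -/
noncomputable def ULIL (δ : ℝ) (n : ℕ) : Set (ℕ → Bool) :=
  {ω | ∃ k : ℕ, ⌈δ ^ n⌉₊ ≤ k ∧ k ≤ ⌈δ ^ (n + 1)⌉₊ ∧
    (S ω k : ℝ) - k / 2 > δ * Real.sqrt ((1 / 2) * ⌈δ ^ n⌉₊ * Real.log (Real.log (⌈δ ^ n⌉₊ : ℝ)))}

namespace Stmt13

noncomputable section

/-- the tail (shift) of a sequence -/
def tl (ω : ℕ → Bool) : ℕ → Bool := fun i => ω (i + 1)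

/-- the centered walk `2 S_k - k` -/
def D (ω : ℕ → Bool) (k : ℕ) : ℤ := 2 * (S ω k : ℤ) - k

lemma pref_length (ω : ℕ → Bool) (n : ℕ) : (pref ω n).length = n := by
  simp [pref]

lemma pref_zero (ω : ℕ → Bool) : pref ω 0 = [] := by simp [pref]

lemma pref_succ (ω : ℕ → Bool) (n : ℕ) :
    pref ω (n + 1) = ω 0 :: pref (tl ω) n := by
  simp [pref, tl, List.range_succ_eq_map, Function.comp]

lemma S_zero (ω : ℕ → Bool) : S ω 0 = 0 := by simp [S, pref_zero]

lemma S_succ (ω : ℕ → Bool) (k : ℕ) :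
    S ω (k + 1) = (if ω 0 then 1 else 0) + S (tl ω) k := by
  rw [S, pref_succ, List.count_cons]
  cases h : ω 0 <;> simp [S, h, Nat.add_comm]

lemma D_zero (ω : ℕ → Bool) : D ω 0 = 0 := by simp [D, S_zero]

lemma D_succ (ω : ℕ → Bool) (k : ℕ) :
    D ω (k + 1) = (if ω 0 then 1 else -1) + D (tl ω) k := by
  rw [D, D, S_succ]
  cases h : ω 0 <;> simp <;> push_cast <;> ring

/-- all binary strings of length `N` -/
def allS : ℕ → Finset (List Bool)
  | 0 => {[]}
  | N + 1 => (allS N).image (List.cons true) ∪ (allS N).image (List.cons false)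

lemma mem_allS (ω : ℕ → Bool) : ∀ N, pref ω N ∈ allS N := by
  intro N
  induction N generalizing ω with
  | zero => simp [allS, pref_zero]
  | succ N ih =>
    rw [pref_succ]
    cases h : ω 0
    · exact Finset.mem_union_right _ (Finset.mem_image_of_mem _ (ih (tl ω)))
    · exact Finset.mem_union_left _ (Finset.mem_image_of_mem _ (ih (tl ω)))

lemma card_allS : ∀ N, (allS N).card ≤ 2 ^ N := by
  intro N
  induction N with
  | zero => simp [allS]
  | succ N ih =>
    calc (allS (N+1)).card ≤ ((allS N).image (List.cons true)).card
        + ((allS N).image (List.cons false)).card := Finset.card_union_le _ _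
      _ ≤ (allS N).card + (allS N).card :=
        Nat.add_le_add (Finset.card_image_le) (Finset.card_image_le)
      _ ≤ 2 ^ N + 2 ^ N := Nat.add_le_add ih ih
      _ = 2 ^ (N + 1) := by ring

lemma length_of_mem_allS : ∀ N, ∀ x ∈ allS N, x.length = N := by
  intro N
  induction N with
  | zero => simp [allS]
  | succ N ih =>
    intro x hx
    rcases Finset.mem_union.1 hx with h | h <;>
    · obtain ⟨y, hy, rfl⟩ := Finset.mem_image.1 h
      simp [ih y hy]

/-- strings of length `N` whose walk, started from `v`, reaches level `b` -/
def Bad (b : ℤ) : ℕ → ℤ → Finset (List Bool)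
  | 0, v => if b ≤ v then {[]} else ∅
  | N + 1, v =>
    if b ≤ v then allS (N + 1)
    else (Bad b N (v + 1)).image (List.cons true) ∪ (Bad b N (v - 1)).image (List.cons false)

lemma Bad_subset_allS (b : ℤ) : ∀ N v, Bad b N v ⊆ allS N := by
  intro N
  induction N with
  | zero =>
    intro v
    rw [Bad]
    split
    · simp [allS]
    · simp
  | succ N ih =>
    intro v
    rw [Bad]
    split
    · exact Finset.Subset.refl _
    · exact Finset.union_subset_union (Finset.image_subset_image (ih _))
        (Finset.image_subset_image (ih _))

lemma mem_Bad (b : ℤ) : ∀ N (v : ℤ) (ω : ℕ → Bool),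
    (∃ k, k ≤ N ∧ b ≤ v + D ω k) → pref ω N ∈ Bad b N v := by
  intro N
  induction N with
  | zero =>
    rintro v ω ⟨k, hk, hb⟩
    interval_cases k
    rw [D_zero] at hb
    rw [Bad, if_pos (by omega), pref_zero]
    simp
  | succ N ih =>
    rintro v ω ⟨k, hk, hb⟩
    by_cases hbv : b ≤ v
    · rw [Bad, if_pos hbv]; exact mem_allS ω (N + 1)
    · rw [Bad, if_neg hbv]
      rcases k with _ | k'
      · rw [D_zero] at hb; omega
      · rw [D_succ] at hb
        rw [pref_succ]
        cases h : ω 0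
        · rw [h] at hb; simp only [if_neg Bool.false_ne_true, Bool.false_eq_true, if_false] at hb
          refine Finset.mem_union_right _ (Finset.mem_image_of_mem _ ?_)
          exact ih (v - 1) (tl ω) ⟨k', by omega, by omega⟩
        · rw [h] at hb; simp only [if_pos] at hb
          refine Finset.mem_union_left _ (Finset.mem_image_of_mem _ ?_)
          exact ih (v + 1) (tl ω) ⟨k', by omega, by omega⟩

lemma card_Bad (b : ℤ) (l : ℝ) (hl : 0 ≤ l) : ∀ N (v : ℤ),
    ((Bad b N v).card : ℝ) ≤ 2 ^ N * Real.exp (N * l ^ 2 / 2 + l * ((v : ℝ) - (b : ℝ))) := by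
  intro N
  induction N with
  | zero =>
    intro v
    by_cases hbv : b ≤ v
    · rw [Bad, if_pos hbv]
      have hvb : (0:ℝ) ≤ (v:ℝ) - (b:ℝ) := by
        have : (b:ℝ) ≤ (v:ℝ) := by exact_mod_cast hbv
        linarith
      have : (1:ℝ) ≤ Real.exp ((0:ℕ) * l ^ 2 / 2 + l * ((v : ℝ) - (b : ℝ))) :=
        Real.one_le_exp (by positivity)
      simpa using this
    · rw [Bad, if_neg hbv]; simp [Real.exp_nonneg]
  | succ N ih =>
    intro v
    by_cases hbv : b ≤ v
    · rw [Bad, if_pos hbv]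
      have hvb : (0:ℝ) ≤ (v:ℝ) - (b:ℝ) := by
        have : (b:ℝ) ≤ (v:ℝ) := by exact_mod_cast hbv
        linarith
      have h1 : ((allS (N+1)).card : ℝ) ≤ 2 ^ (N+1) := by
        exact_mod_cast card_allS (N+1)
      have h2 : (1:ℝ) ≤ Real.exp (((N+1:ℕ):ℝ) * l ^ 2 / 2 + l * ((v : ℝ) - (b : ℝ))) :=
        Real.one_le_exp (by positivity)
      nlinarith [pow_pos (by norm_num : (0:ℝ) < 2) (N+1)]
    · have hcard : ((Bad b (N+1) v).card : ℝ)
          ≤ ((Bad b N (v+1)).card : ℝ) + ((Bad b N (v-1)).card : ℝ) := by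
        rw [Bad, if_neg hbv]
        have := Finset.card_union_le ((Bad b N (v + 1)).image (List.cons true))
          ((Bad b N (v - 1)).image (List.cons false))
        have h1 := Finset.card_image_le (s := Bad b N (v+1)) (f := List.cons true)
        have h2 := Finset.card_image_le (s := Bad b N (v-1)) (f := List.cons false)
        exact_mod_cast le_trans (Nat.cast_le.2 this) (by push_cast; linarith)
      have key : Real.exp l + Real.exp (-l) ≤ 2 * Real.exp (l ^ 2 / 2) := by
        have := Real.cosh_le_exp_half_sq l
        rw [Real.cosh_eq] at this
        linarith
      have e1 := ih (v + 1)
      have e2 := ih (v - 1)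
      have q1 : (N:ℝ) * l ^ 2 / 2 + l * ((((v:ℤ)+1 : ℤ):ℝ) - (b:ℝ))
          = ((N:ℝ) * l ^ 2 / 2 + l * ((v:ℝ) - (b:ℝ))) + l := by push_cast; ring
      have q2 : (N:ℝ) * l ^ 2 / 2 + l * ((((v:ℤ)-1 : ℤ):ℝ) - (b:ℝ))
          = ((N:ℝ) * l ^ 2 / 2 + l * ((v:ℝ) - (b:ℝ))) + (-l) := by push_cast; ring
      rw [q1] at e1
      rw [q2] at e2
      calc ((Bad b (N+1) v).card : ℝ)
          ≤ ((Bad b N (v+1)).card : ℝ) + ((Bad b N (v-1)).card : ℝ) := hcard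
        _ ≤ 2 ^ N * Real.exp ((N:ℝ) * l ^ 2 / 2 + l * ((v:ℝ) - (b:ℝ)))
              * (Real.exp l + Real.exp (-l)) := by
            rw [Real.exp_add, Real.exp_add] at e1 e2
            rw [Real.exp_add]
            ring_nf
            ring_nf at e1 e2
            linarith
        _ ≤ 2 ^ N * Real.exp ((N:ℝ) * l ^ 2 / 2 + l * ((v:ℝ) - (b:ℝ)))
              * (2 * Real.exp (l ^ 2 / 2)) :=
            mul_le_mul_of_nonneg_left key (by positivity)
        _ = 2 ^ (N+1) * Real.exp (((N:ℝ) * l ^ 2 / 2 + l * ((v:ℝ) - (b:ℝ))) + l ^ 2 / 2) := by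
            simp only [Real.exp_add]; ring
        _ = _ := by
            congr 1
            push_cast
            ring

lemma pref_mem_cyl (ω : ℕ → Bool) (N : ℕ) : ω ∈ Cyl (pref ω N) := by
  simp [Cyl, PrefixOf, pref_length]

lemma measure_bad_le (μ : Measure (ℕ → Bool))
    (hμ : ∀ x : List Bool, μ (Cyl x) = (2 : ℝ≥0∞)⁻¹ ^ x.length)
    (b : ℤ) (N : ℕ) (l : ℝ) (hl : 0 ≤ l) :
    μ {ω | ∃ k, k ≤ N ∧ b ≤ D ω k}
      ≤ ENNReal.ofReal (Real.exp ((N:ℝ) * l ^ 2 / 2 - l * (b:ℝ))) := by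
  set T := Bad b N 0 with hT
  have hsub : {ω | ∃ k, k ≤ N ∧ b ≤ D ω k} ⊆ ⋃ x ∈ T, Cyl x := by
    intro ω hω
    have hmem : pref ω N ∈ T := mem_Bad b N 0 ω (by
      obtain ⟨k, hk, hb⟩ := hω
      exact ⟨k, hk, by omega⟩)
    exact Set.mem_biUnion hmem (pref_mem_cyl ω N)
  have hstep : μ {ω | ∃ k, k ≤ N ∧ b ≤ D ω k} ≤ (T.card : ℝ≥0∞) * (2 : ℝ≥0∞)⁻¹ ^ N := by
    calc μ {ω | ∃ k, k ≤ N ∧ b ≤ D ω k} ≤ μ (⋃ x ∈ T, Cyl x) := measure_mono hsub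
      _ ≤ ∑ x ∈ T, μ (Cyl x) := measure_biUnion_finset_le T Cyl
      _ = ∑ _x ∈ T, (2 : ℝ≥0∞)⁻¹ ^ N := by
          refine Finset.sum_congr rfl fun x hx => ?_
          rw [hμ x, length_of_mem_allS N x (Bad_subset_allS b N 0 hx)]
      _ = (T.card : ℝ≥0∞) * (2 : ℝ≥0∞)⁻¹ ^ N := by
          rw [Finset.sum_const, nsmul_eq_mul]
  refine le_trans hstep ?_
  have h2 : ((2 : ℝ≥0∞))⁻¹ ^ N = ENNReal.ofReal ((2:ℝ)⁻¹ ^ N) := by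
    rw [ENNReal.ofReal_pow (by norm_num)]
    congr 1
    rw [ENNReal.ofReal_inv_of_pos (by norm_num)]
    norm_num
  rw [h2, ← ENNReal.ofReal_natCast, ← ENNReal.ofReal_mul (by positivity)]
  refine ENNReal.ofReal_le_ofReal ?_
  have hc := card_Bad b l hl N 0
  have h0 : (((0:ℤ)):ℝ) = 0 := by norm_num
  rw [h0] at hc
  have hpow : (0:ℝ) < 2 ^ N := by positivity
  have h2inv : ((2:ℝ)⁻¹) ^ N = ((2:ℝ) ^ N)⁻¹ := by rw [inv_pow]
  have heq : (N:ℝ) * l ^ 2 / 2 + l * (0 - (b:ℝ)) = (N:ℝ) * l ^ 2 / 2 - l * (b:ℝ) := by ring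
  rw [heq] at hc
  calc (T.card : ℝ) * ((2:ℝ)⁻¹) ^ N
      ≤ (2 ^ N * Real.exp ((N:ℝ) * l ^ 2 / 2 - l * (b:ℝ))) * ((2:ℝ)⁻¹) ^ N := by
        exact mul_le_mul_of_nonneg_right hc (by positivity)
    _ = Real.exp ((N:ℝ) * l ^ 2 / 2 - l * (b:ℝ)) := by
        rw [h2inv]
        field_simp
  
lemma measure_core (μ : Measure (ℕ → Bool))
    (hμ : ∀ x : List Bool, μ (Cyl x) = (2 : ℝ≥0∞)⁻¹ ^ x.length)
    (b : ℤ) (hb : 1 ≤ b) (N : ℕ) (hN : 1 ≤ N) :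
    μ {ω | ∃ k, k ≤ N ∧ b ≤ D ω k}
      ≤ ENNReal.ofReal (Real.exp (-(b:ℝ)^2 / (2*(N:ℝ)))) := by
  have hNpos : (0:ℝ) < (N:ℝ) := by exact_mod_cast hN
  have hb0 : (0:ℝ) ≤ (b:ℝ) := by exact_mod_cast (by omega : (0:ℤ) ≤ b)
  have h := measure_bad_le μ hμ b N ((b:ℝ)/(N:ℝ)) (div_nonneg hb0 hNpos.le)
  have heq : (N:ℝ) * ((b:ℝ)/(N:ℝ)) ^ 2 / 2 - ((b:ℝ)/(N:ℝ)) * (b:ℝ)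
      = -(b:ℝ)^2 / (2*(N:ℝ)) := by
    field_simp
    ring
  rwa [heq] at h

lemma measure_univ_eq (μ : Measure (ℕ → Bool))
    (hμ : ∀ x : List Bool, μ (Cyl x) = (2 : ℝ≥0∞)⁻¹ ^ x.length) :
    μ Set.univ = 1 := by
  have h := hμ []
  have hc : Cyl ([] : List Bool) = Set.univ := by
    ext ω; simp [Cyl, PrefixOf, pref_zero]
  rw [hc] at h
  simpa using h

lemma main_bound (μ : Measure (ℕ → Bool))
    (hμ : ∀ x : List Bool, μ (Cyl x) = (2 : ℝ≥0∞)⁻¹ ^ x.length)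
    (δ : ℝ) (hδ : 1 < δ) (n : ℕ) :
    μ (ULIL δ n) ≤ ENNReal.ofReal
      (Real.exp δ * Real.exp (-δ * Real.log (Real.log (⌈δ ^ n⌉₊ : ℝ)))) := by
  have hδ0 : (0:ℝ) < δ := by linarith
  set m : ℕ := ⌈δ ^ n⌉₊ with hm
  set N : ℕ := ⌈δ ^ (n+1)⌉₊ with hN
  set L : ℝ := Real.log (Real.log (m : ℝ)) with hL
  have hm1 : 1 ≤ m := Nat.one_le_ceil_iff.2 (by positivity)
  have hmN : m ≤ N := Nat.ceil_le_ceil (pow_le_pow_right₀ (le_of_lt hδ) (by omega))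
  have hN1 : 1 ≤ N := le_trans hm1 hmN
  have hNpos : (0:ℝ) < (N:ℝ) := by exact_mod_cast hN1
  by_cases hLpos : 0 < L
  · -- nontrivial case
    set a : ℝ := δ * Real.sqrt (1/2 * (m:ℝ) * L) with ha
    have hmL : (0:ℝ) ≤ 1/2 * (m:ℝ) * L := by positivity
    have ha0 : 0 ≤ a := by positivity
    set b : ℤ := ⌊2*a⌋ + 1 with hb
    have hb1 : 1 ≤ b := by
      have := Int.floor_nonneg.2 (by positivity : (0:ℝ) ≤ 2*a)
      omega
    have hba : 2*a < (b:ℝ) := by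
      rw [hb]
      push_cast
      exact Int.lt_floor_add_one (2*a)
    have hsub : ULIL δ n ⊆ {ω | ∃ k, k ≤ N ∧ b ≤ D ω k} := by
      rintro ω ⟨k, hk1, hk2, hgt⟩
      refine ⟨k, hk2, ?_⟩
      have hD : ((D ω k : ℤ):ℝ) = 2*((S ω k : ℕ) : ℝ) - (k:ℝ) := by
        rw [D]; push_cast; ring
      have h2a : 2*a < ((D ω k : ℤ):ℝ) := by
        rw [hD]
        have : a < ((S ω k : ℕ):ℝ) - (k:ℝ)/2 := hgt
        linarith
      have : ⌊2*a⌋ < D ω k := Int.floor_lt.2 h2a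
      omega
    have hcore := measure_core μ hμ b hb1 N hN1
    refine le_trans (le_trans (measure_mono hsub) hcore) (ENNReal.ofReal_le_ofReal ?_)
    rw [← Real.exp_add]
    refine Real.exp_le_exp.2 ?_
    -- goal: -(b:ℝ)^2 / (2*N) ≤ δ + -δ * L
    have hsq : Real.sqrt (1/2*(m:ℝ)*L) ^ 2 = 1/2*(m:ℝ)*L := Real.sq_sqrt hmL
    have h4 : 2 * δ^2 * (m:ℝ) * L ≤ (b:ℝ)^2 := by nlinarith
    have hmle : δ^n ≤ (m:ℝ) := Nat.le_ceil _
    have hNle : (N:ℝ) ≤ δ*(m:ℝ) + 1 := by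
      have h5 : (N:ℝ) < δ^(n+1) + 1 := Nat.ceil_lt_add_one (by positivity)
      have h6 : δ^(n+1) ≤ δ * (m:ℝ) := by
        rw [pow_succ]
        nlinarith
      linarith
    have hLN : L ≤ (N:ℝ) := by
      have hlogm : 0 < Real.log (m:ℝ) := by
        rcases lt_or_ge 0 (Real.log (m:ℝ)) with h | h
        · exact h
        · exfalso
          have h0 : 0 ≤ Real.log (m:ℝ) := Real.log_nonneg (by exact_mod_cast hm1)
          have hz : Real.log (m:ℝ) = 0 := le_antisymm h h0
          rw [hL, hz, Real.log_zero] at hLpos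
          exact lt_irrefl _ hLpos
      have h6 : L ≤ Real.log (m:ℝ) - 1 := by
        rw [hL]
        exact Real.log_le_sub_one_of_pos hlogm
      have h7 : Real.log (m:ℝ) ≤ (m:ℝ) - 1 := by
        refine Real.log_le_sub_one_of_pos ?_
        exact_mod_cast Nat.lt_of_lt_of_le Nat.zero_lt_one hm1
      have h8 : (m:ℝ) ≤ (N:ℝ) := by exact_mod_cast hmN
      linarith
    have key : δ * L * (N:ℝ) - δ^2 * (m:ℝ) * L ≤ δ * (N:ℝ) := by
      nlinarith [mul_nonneg (mul_pos hδ0 hLpos).le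
          (by linarith : (0:ℝ) ≤ δ*(m:ℝ) + 1 - (N:ℝ)),
        mul_nonneg hδ0.le (by linarith : (0:ℝ) ≤ (N:ℝ) - L)]
    have hfin : -(δ^2*(m:ℝ)*L)/(N:ℝ) ≤ δ + -δ * L := by
      rw [div_le_iff₀ hNpos]
      nlinarith
    have hdiv : -(b:ℝ)^2/(2*(N:ℝ)) ≤ -(δ^2*(m:ℝ)*L)/(N:ℝ) := by
      rw [div_le_div_iff₀ (by positivity) hNpos]
      nlinarith
    linarith
  · -- trivial case : L ≤ 0
    push_neg at hLpos
    have h1 : (1:ℝ) ≤ Real.exp δ * Real.exp (-δ * L) := by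
      rw [← Real.exp_add]
      refine Real.one_le_exp ?_
      nlinarith
    calc μ (ULIL δ n) ≤ μ Set.univ := measure_mono (Set.subset_univ _)
      _ = 1 := measure_univ_eq μ hμ
      _ ≤ _ := by
          rw [← ENNReal.ofReal_one]
          exact ENNReal.ofReal_le_ofReal h1

end

end Stmt13

/-- `L(U_{δ,n}) ≤ c·e^{-δ ln ln m_n}` and `∑_n L(U_{δ,n}) < ∞`. -/
theorem stmt_13 (μ : Measure (ℕ → Bool))
    (hμ : ∀ x : List Bool, μ (Cyl x) = (2 : ℝ≥0∞)⁻¹ ^ x.length)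
    (δ : ℝ) (hδ : 1 < δ) :
    (∃ c : ℝ, 0 < c ∧ ∀ n : ℕ, 1 ≤ n →
      μ (ULIL δ n) ≤ ENNReal.ofReal (c * Real.exp (-δ * Real.log (Real.log (⌈δ ^ n⌉₊ : ℝ))))) ∧
    Summable fun n => (μ (ULIL δ n)).toReal := by
  have hδ0 : (0:ℝ) < δ := by linarith
  have hlogδ : 0 < Real.log δ := Real.log_pos hδ
  constructor
  · exact ⟨Real.exp δ, Real.exp_pos δ, fun n _ => Stmt13.main_bound μ hμ δ hδ n⟩
  · rw [← summable_nat_add_iff 1]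
    have hsummand : ∀ n : ℕ,
        (μ (ULIL δ (n+1))).toReal
          ≤ Real.exp δ * ((((n+1:ℕ)):ℝ) ^ (-δ) * (Real.log δ) ^ (-δ)) := by
      intro n
      set m : ℕ := ⌈δ ^ (n+1)⌉₊ with hm
      set y : ℝ := Real.log (m:ℝ) with hy
      have hmle : δ^(n+1) ≤ (m:ℝ) := Nat.le_ceil _
      have hyge : (((n+1:ℕ)):ℝ) * Real.log δ ≤ y := by
        rw [hy, ← Real.log_pow]
        exact Real.log_le_log (by positivity) hmle
      have hypos : 0 < y := lt_of_lt_of_le (by positivity) hyge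
      have h1 : (μ (ULIL δ (n+1))).toReal ≤ Real.exp δ * Real.exp (-δ * Real.log y) := by
        refine ENNReal.toReal_le_of_le_ofReal (by positivity) ?_
        exact Stmt13.main_bound μ hμ δ hδ (n+1)
      have h2 : Real.exp (-δ * Real.log y) = y ^ (-δ) := by
        rw [Real.rpow_def_of_pos hypos]
        ring_nf
      have h3 : y ^ (-δ) ≤ ((((n+1:ℕ)):ℝ) * Real.log δ) ^ (-δ) :=
        Real.rpow_le_rpow_of_nonpos (by positivity) hyge (by linarith)
      have h4 : ((((n+1:ℕ)):ℝ) * Real.log δ) ^ (-δ)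
          = (((n+1:ℕ)):ℝ) ^ (-δ) * (Real.log δ) ^ (-δ) :=
        Real.mul_rpow (by positivity) hlogδ.le
      calc (μ (ULIL δ (n+1))).toReal
          ≤ Real.exp δ * Real.exp (-δ * Real.log y) := h1
        _ = Real.exp δ * (y ^ (-δ)) := by rw [h2]
        _ ≤ Real.exp δ * ((((n+1:ℕ)):ℝ) ^ (-δ) * (Real.log δ) ^ (-δ)) := by
            rw [← h4]
            exact mul_le_mul_of_nonneg_left h3 (Real.exp_pos δ).le
    refine Summable.of_nonneg_of_le (fun n => ENNReal.toReal_nonneg) hsummand ?_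
    have h1 : Summable (fun n : ℕ => ((n:ℝ)) ^ (-δ)) :=
      Real.summable_nat_rpow.2 (by linarith)
    have h2 : Summable (fun n : ℕ => (((n+1:ℕ)):ℝ) ^ (-δ)) :=
      (summable_nat_add_iff 1).2 h1
    exact ((h2.mul_right _).mul_left _)
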